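/- arXiv:1508.02524 — 4 statements merged into one kernel-verified Lean document; each statement's English description precedes it below -/
import Mathlib

section
/- If λ ∈ ℝ^d is sorted decreasingly with pairwise distinct entries, then the neighbors (vertices connected by an edge) of the vertex λ in the polytope conv{P_σ λ : σ ∈ Σ_d} are exactly the d−1 vectors obtained from λ by transposing adjacent coordinates i and i+1 for i = 1,…,d−1. -/
open Finset

/-- `u` and `v` are neighboring vertices of the polytope `P`: they are distinct and the
segment joining them is a face (an extreme subset, i.e. an edge) of `P`. -/
def IsNeighbor {d : ℕ} (P : Set (Fin d → ℝ)) (u v : Fin d → ℝ) : Prop :=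
  u ≠ v ∧ IsExtreme ℝ P (segment ℝ u v)


namespace Stmt3Aux

variable {d : ℕ}

/-- A strictly monotone permutation of `Fin d` is the identity (pointwise). -/
lemma perm_apply_eq_of_strictMono (σ : Equiv.Perm (Fin d)) (h : StrictMono ⇑σ) (k : Fin d) :
    σ k = k := by
  haveI : WellFoundedLT (Fin d) := inferInstance
  haveI : WellFoundedGT (Fin d) := inferInstance
  exact le_antisymm h.apply_le h.le_apply

/-- Partial sums of `lam - lam ∘ σ` over initial segments are nonnegative
(majorization for a decreasing `lam`). -/
lemma partial_sum_nonneg (lam : Fin d → ℝ) (hsort : StrictAnti lam) (σ : Equiv.Perm (Fin d))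
    (n : ℕ) :
    0 ≤ ∑ j ∈ univ.filter (fun j : Fin d => (j : ℕ) < n), (lam j - lam (σ j)) := by
  classical
  set A : Finset (Fin d) := univ.filter (fun j : Fin d => (j : ℕ) < n) with hA
  rcases Nat.eq_zero_or_pos n with rfl | hn
  · simp [hA]
  rcases lt_or_ge d n with hnd | hnd
  · have hAu : A = univ := by
      ext j
      simp only [hA, Finset.mem_filter, Finset.mem_univ, true_and, iff_true]
      exact lt_trans j.isLt hnd
    rw [hAu, Finset.sum_sub_distrib, Equiv.sum_comp σ lam, sub_self]
  · obtain ⟨m, rfl⟩ : ∃ m, n = m + 1 := ⟨n - 1, by omega⟩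
    have hm : m < d := by omega
    set b : ℝ := lam ⟨m, hm⟩ with hb
    set T : Finset (Fin d) := A.image σ with hT
    have hsum2 : ∑ j ∈ A, lam (σ j) = ∑ j ∈ T, lam j :=
      (Finset.sum_image (by intro x _ y _ h; exact σ.injective h)).symm
    have hsplitA : ∑ j ∈ A, lam j = ∑ j ∈ A ∩ T, lam j + ∑ j ∈ A \ T, lam j :=
      (Finset.sum_inter_add_sum_sdiff A T lam).symm
    have hsplitT : ∑ j ∈ T, lam j = ∑ j ∈ A ∩ T, lam j + ∑ j ∈ T \ A, lam j := by
      rw [Finset.inter_comm]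
      exact (Finset.sum_inter_add_sum_sdiff T A lam).symm
    have hcard : (A \ T).card = (T \ A).card := by
      have h1 : A.card = T.card := (Finset.card_image_of_injective A σ.injective).symm
      have h2 := Finset.card_sdiff_add_card_inter A T
      have h3 := Finset.card_sdiff_add_card_inter T A
      rw [Finset.inter_comm] at h3
      omega
    have hAdT : ∀ j ∈ A \ T, b ≤ lam j := by
      intro j hj
      have hj' : (j : ℕ) < m + 1 := by
        have := (Finset.mem_sdiff.1 hj).1
        simpa [hA] using this
      exact hsort.antitone (by simp only [Fin.le_def]; omega)
    have hTdA : ∀ j ∈ T \ A, lam j ≤ b := by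
      intro j hj
      have hj' : ¬ (j : ℕ) < m + 1 := by
        have := (Finset.mem_sdiff.1 hj).2
        simpa [hA] using this
      exact (hsort (by simp only [Fin.lt_def]; omega)).le
    have h1 : ∑ j ∈ T \ A, lam j ≤ (T \ A).card • b := Finset.sum_le_card_nsmul _ _ _ hTdA
    have h2 : (A \ T).card • b ≤ ∑ j ∈ A \ T, lam j := Finset.card_nsmul_le_sum _ _ _ hAdT
    rw [Finset.sum_sub_distrib, hsum2, hsplitA, hsplitT, hcard] at *
    simp only [nsmul_eq_mul] at h1 h2
    linarith

/-- The backward direction: a neighbor of `lam` is an adjacent transposition of `lam`. -/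
lemma backward (lam : Fin d → ℝ) (hsort : StrictAnti lam) (σ : Equiv.Perm (Fin d))
    (hne : lam ∘ ⇑σ ≠ lam)
    (hext : IsExtreme ℝ (convexHull ℝ {μ : Fin d → ℝ | ∃ τ : Equiv.Perm (Fin d), μ = lam ∘ τ})
      (segment ℝ lam (lam ∘ ⇑σ))) :
    ∃ (i : ℕ) (hi : i + 1 < d),
      lam ∘ ⇑σ = lam ∘ ⇑(Equiv.swap ⟨i, Nat.lt_of_succ_lt hi⟩ ⟨i + 1, hi⟩) := by
  classical
  set P := convexHull ℝ {μ : Fin d → ℝ | ∃ τ : Equiv.Perm (Fin d), μ = lam ∘ τ} with hP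
  set a : Fin d → ℝ := fun j => lam j - lam (σ j) with ha
  set C : ℕ → ℝ := fun n => ∑ j ∈ univ.filter (fun j : Fin d => (j : ℕ) < n), a j with hC
  have hC0 : C 0 = 0 := by simp [hC]
  have hCtop : ∀ n, d ≤ n → C n = 0 := by
    intro n hdn
    have hAu : univ.filter (fun j : Fin d => (j : ℕ) < n) = univ := by
      ext j
      simp only [Finset.mem_filter, Finset.mem_univ, true_and, iff_true]
      exact lt_of_lt_of_le j.isLt hdn
    simp only [hC, hAu, ha]
    rw [Finset.sum_sub_distrib, Equiv.sum_comp σ lam, sub_self]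
  have hCnn : ∀ n, 0 ≤ C n := fun n => partial_sum_nonneg lam hsort σ n
  have hstep : ∀ n (h : n < d), C (n + 1) = C n + a ⟨n, h⟩ := by
    intro n h
    have hins : univ.filter (fun j : Fin d => (j : ℕ) < n + 1)
        = insert (⟨n, h⟩ : Fin d) (univ.filter (fun j : Fin d => (j : ℕ) < n)) := by
      ext j
      simp only [Finset.mem_filter, Finset.mem_univ, true_and, Finset.mem_insert, Fin.ext_iff]
      omega
    have hnotmem : (⟨n, h⟩ : Fin d) ∉ univ.filter (fun j : Fin d => (j : ℕ) < n) := by simp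
    simp only [hC, hins, Finset.sum_insert hnotmem]
    ring
  set vert : ℕ → (Fin d → ℝ) := fun i =>
    if h : i + 1 < d then lam ∘ ⇑(Equiv.swap ⟨i, Nat.lt_of_succ_lt h⟩ ⟨i + 1, h⟩) else lam
    with hvert
  have hvertOrb : ∀ i, vert i ∈ {μ : Fin d → ℝ | ∃ τ : Equiv.Perm (Fin d), μ = lam ∘ τ} := by
    intro i
    rw [hvert]; dsimp only
    split_ifs with h
    · exact ⟨_, rfl⟩
    · exact ⟨1, by funext j; simp⟩
  have hvertP : ∀ i, vert i ∈ P := fun i => subset_convexHull ℝ _ (hvertOrb i)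
  set γ : ℕ → ℝ := fun i =>
    if h : i + 1 < d then C (i + 1) / (lam ⟨i, Nat.lt_of_succ_lt h⟩ - lam ⟨i + 1, h⟩) else 0
    with hγ
  have hγnn : ∀ i, 0 ≤ γ i := by
    intro i
    rw [hγ]; dsimp only
    split_ifs with h
    · apply div_nonneg (hCnn _)
      have hlt : (⟨i, Nat.lt_of_succ_lt h⟩ : Fin d) < ⟨i + 1, h⟩ := by simp [Fin.lt_def]
      linarith [hsort hlt]
    · exact le_refl 0
  have keyid : ∀ k : Fin d, ∑ i ∈ Finset.range (d - 1), γ i * (vert i k - lam k)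
      = lam (σ k) - lam k := by
    intro k
    have hterm : ∀ i ∈ Finset.range (d - 1), γ i * (vert i k - lam k)
        = (if i + 1 = (k : ℕ) then C (k : ℕ) else 0)
          + (if i = (k : ℕ) then -(C ((k : ℕ) + 1)) else 0) := by
      intro i hi
      have h : i + 1 < d := by have := Finset.mem_range.1 hi; omega
      have hIlt : (⟨i, Nat.lt_of_succ_lt h⟩ : Fin d) < ⟨i + 1, h⟩ := by simp [Fin.lt_def]
      have hlampos : 0 < lam ⟨i, Nat.lt_of_succ_lt h⟩ - lam ⟨i + 1, h⟩ := by
        linarith [hsort hIlt]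
      rw [hγ, hvert]; dsimp only
      rw [dif_pos h, dif_pos h]
      by_cases hk : (k : ℕ) = i
      · have hkI : k = ⟨i, Nat.lt_of_succ_lt h⟩ := Fin.ext hk
        rw [if_neg (by omega), if_pos hk.symm, hkI]
        simp only [Function.comp_apply, Equiv.swap_apply_left]
        field_simp
        ring
      · by_cases hk1 : (k : ℕ) = i + 1
        · have hkI1 : k = ⟨i + 1, h⟩ := Fin.ext hk1
          rw [if_pos hk1.symm, if_neg (by omega), hkI1]
          simp only [Function.comp_apply, Equiv.swap_apply_right]
          rw [div_mul_cancel₀ _ (ne_of_gt hlampos), add_zero]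
        · rw [if_neg (by omega), if_neg (by omega)]
          have hne1 : k ≠ ⟨i, Nat.lt_of_succ_lt h⟩ := by simp [Fin.ext_iff, hk]
          have hne2 : k ≠ ⟨i + 1, h⟩ := by simp [Fin.ext_iff, hk1]
          simp only [Function.comp_apply, Equiv.swap_apply_of_ne_of_ne hne1 hne2]
          ring
    rw [Finset.sum_congr rfl hterm, Finset.sum_add_distrib]
    have hs2 : (∑ i ∈ Finset.range (d - 1), if i = (k : ℕ) then -(C ((k : ℕ) + 1)) else 0)
        = if (k : ℕ) ∈ Finset.range (d - 1) then -(C ((k : ℕ) + 1)) else 0 :=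
      Finset.sum_ite_eq' (Finset.range (d - 1)) ((k : ℕ)) (fun _ => -(C ((k : ℕ) + 1)))
    have hs1 : (∑ i ∈ Finset.range (d - 1), if i + 1 = (k : ℕ) then C (k : ℕ) else 0)
        = if 1 ≤ (k : ℕ) then C (k : ℕ) else 0 := by
      rcases Nat.eq_zero_or_pos (k : ℕ) with h0 | h0
      · rw [h0]
        rw [if_neg (by omega)]
        apply Finset.sum_eq_zero
        intro i _
        rw [if_neg (by omega)]
      · obtain ⟨m, hm⟩ : ∃ m, (k : ℕ) = m + 1 := ⟨(k : ℕ) - 1, by omega⟩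
        rw [hm, if_pos (by omega)]
        have hiff : ∀ i, (i + 1 = m + 1) ↔ (i = m) := by intro i; omega
        simp_rw [hiff]
        rw [Finset.sum_ite_eq' (Finset.range (d - 1)) m (fun _ => C (m + 1))]
        rw [if_pos (Finset.mem_range.2 (by have := k.isLt; omega))]
    rw [hs1, hs2]
    have hCk1 : C ((k : ℕ) + 1) = C (k : ℕ) + a k := by
      have h := hstep (k : ℕ) k.isLt
      simpa using h
    have hk0 : ¬ 1 ≤ (k : ℕ) → C (k : ℕ) = 0 := by
      intro h
      have h' : (k : ℕ) = 0 := by omega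
      rw [h', hC0]
    have hkd : ¬ (k : ℕ) ∈ Finset.range (d - 1) → C ((k : ℕ) + 1) = 0 := by
      intro h
      rw [Finset.mem_range] at h
      exact hCtop _ (by have := k.isLt; omega)
    have hgoal : (if 1 ≤ (k : ℕ) then C (k : ℕ) else 0)
        + (if (k : ℕ) ∈ Finset.range (d - 1) then -(C ((k : ℕ) + 1)) else 0)
        = C (k : ℕ) - C ((k : ℕ) + 1) := by
      split_ifs with h1 h2
      · ring
      · rw [hkd h2]; ring
      · rw [hk0 h1]; ring
      · rw [hk0 ‹¬ 1 ≤ (k : ℕ)›, hkd ‹¬ (k : ℕ) ∈ Finset.range (d - 1)›]; ring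
    rw [hgoal, hCk1]
    simp only [ha]
    ring
  have hvec : ∑ i ∈ Finset.range (d - 1), γ i • (vert i - lam) = lam ∘ ⇑σ - lam := by
    funext k
    rw [Finset.sum_apply]
    simp only [Pi.smul_apply, Pi.sub_apply, smul_eq_mul, Function.comp_apply]
    exact keyid k
  set Γ : ℝ := ∑ i ∈ Finset.range (d - 1), γ i with hΓdef
  have hΓnn : 0 ≤ Γ := Finset.sum_nonneg (fun i _ => hγnn i)
  set u : ℝ := 1 / (Γ + 1) with hu
  have hupos : 0 < u := by rw [hu]; positivity
  have hule : u ≤ 1 := by rw [hu, div_le_one (by linarith)]; linarith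
  have huΓ : 1 - u * Γ = u := by rw [hu]; field_simp; ring
  set q : Fin d → ℝ := lam + u • (lam ∘ ⇑σ - lam) with hq
  have hqseg : q ∈ segment ℝ lam (lam ∘ ⇑σ) :=
    ⟨1 - u, u, by linarith, hupos.le, by ring, by rw [hq]; module⟩
  have hqrep : q = u • lam + ∑ i ∈ Finset.range (d - 1), (u * γ i) • vert i := by
    funext k
    have e1 : ∑ i ∈ Finset.range (d - 1), γ i * (vert i k - lam k)
        = (∑ i ∈ Finset.range (d - 1), γ i * vert i k) - Γ * lam k := by
      rw [hΓdef, Finset.sum_mul, ← Finset.sum_sub_distrib]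
      exact Finset.sum_congr rfl (fun i _ => by ring)
    have e2 : ∑ i ∈ Finset.range (d - 1), (u * γ i) * vert i k
        = u * ∑ i ∈ Finset.range (d - 1), γ i * vert i k := by
      rw [Finset.mul_sum]
      exact Finset.sum_congr rfl (fun i _ => by ring)
    have e3 : lam (σ k) - lam k = ∑ i ∈ Finset.range (d - 1), γ i * (vert i k - lam k) :=
      (keyid k).symm
    simp only [hq, Pi.add_apply, Pi.smul_apply, Pi.sub_apply, Function.comp_apply,
      Finset.sum_apply, smul_eq_mul]
    rw [e3, e1, e2]
    linear_combination (lam k) * huΓ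
  have hexk : ∃ k : Fin d, σ k ≠ k := by
    by_contra h
    push_neg at h
    apply hne
    funext k
    simp [h k]
  set S : Finset (Fin d) := univ.filter (fun k => σ k ≠ k) with hS
  have hSne : S.Nonempty := by
    obtain ⟨k, hk⟩ := hexk
    exact ⟨k, by simp [hS, hk]⟩
  set k₀ : Fin d := S.min' hSne with hk₀
  have hk₀S : σ k₀ ≠ k₀ := by
    have h := S.min'_mem hSne
    rw [← hk₀] at h
    simp only [hS, Finset.mem_filter, Finset.mem_univ, true_and] at h
    exact h
  have hfix : ∀ j : Fin d, j < k₀ → σ j = j := by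
    intro j hj
    by_contra hne'
    exact absurd hj (not_lt.2 (S.min'_le j (by simp [hS, hne'])))
  have hk₀lt : k₀ < σ k₀ := by
    rcases lt_or_ge (σ k₀) k₀ with h | h
    · exact absurd (σ.injective (hfix (σ k₀) h)) hk₀S
    · exact lt_of_le_of_ne h (Ne.symm hk₀S)
  set i₀ : ℕ := (k₀ : ℕ) with hi₀def
  have hi₀ : i₀ + 1 < d := by
    have h1 : i₀ + 1 ≤ ((σ k₀ : Fin d) : ℕ) := by
      have := hk₀lt
      rw [Fin.lt_def] at this
      omega
    have := (σ k₀).isLt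
    omega
  have hk₀eq : (⟨i₀, Nat.lt_of_succ_lt hi₀⟩ : Fin d) = k₀ := rfl
  have hCpos : 0 < C (i₀ + 1) := by
    have h1 : C i₀ = 0 := by
      rw [hC]
      apply Finset.sum_eq_zero
      intro j hj
      have hj' : (j : ℕ) < i₀ := by simpa using hj
      have hfj : σ j = j := hfix j (by rwa [Fin.lt_def])
      simp [ha, hfj]
    have h2 := hstep i₀ (Nat.lt_of_succ_lt hi₀)
    rw [h2, h1]
    show (0:ℝ) < 0 + a k₀
    have hak : a k₀ = lam k₀ - lam (σ k₀) := rfl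
    rw [hak]
    linarith [hsort hk₀lt]
  have hγ₀pos : 0 < γ i₀ := by
    rw [hγ]; dsimp only
    rw [dif_pos hi₀]
    apply div_pos hCpos
    have hlt : (⟨i₀, Nat.lt_of_succ_lt hi₀⟩ : Fin d) < ⟨i₀ + 1, hi₀⟩ := by simp [Fin.lt_def]
    linarith [hsort hlt]
  have hmem' : i₀ ∈ Finset.range (d - 1) := Finset.mem_range.2 (by omega)
  have hγ₀leΓ : γ i₀ ≤ Γ := Finset.single_le_sum (fun i _ => hγnn i) hmem'
  set w₀ : ℝ := u * γ i₀ with hw₀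
  have hw₀pos : 0 < w₀ := mul_pos hupos hγ₀pos
  have hw₀lt : w₀ < 1 := by
    have h1 : u * γ i₀ ≤ u * Γ := mul_le_mul_of_nonneg_left hγ₀leΓ hupos.le
    have h2 : u * Γ < 1 := by
      rw [hu]
      have h3 : 1 / (Γ + 1) * Γ = Γ / (Γ + 1) := by ring
      rw [h3, div_lt_one (by linarith)]
      linarith
    rw [hw₀]
    linarith
  have h1w₀ : (1 - w₀) ≠ 0 := ne_of_gt (by linarith)
  set x : Fin d → ℝ := (1 - w₀)⁻¹ • (q - w₀ • vert i₀) with hx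
  have hqx : q = w₀ • vert i₀ + (1 - w₀) • x := by
    rw [hx, smul_inv_smul₀ h1w₀]
    module
  have hxP : x ∈ P := by
    set W : ℕ → ℝ := fun i => if i = i₀ then u else u * γ i with hW
    have hWnn : ∀ i ∈ Finset.range (d - 1), 0 ≤ W i := by
      intro i _
      rw [hW]; dsimp only
      split_ifs
      · exact hupos.le
      · exact mul_nonneg hupos.le (hγnn i)
    have hu1 : u * (Γ + 1) = 1 := by rw [hu]; field_simp
    have hWsum : ∑ i ∈ Finset.range (d - 1), W i = 1 - w₀ := by
      have hcongr : ∀ i ∈ Finset.range (d - 1),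
          W i = u * γ i + (if i = i₀ then u - u * γ i else 0) := by
        intro i _
        rw [hW]; dsimp only
        split_ifs with h
        · rw [h]; ring
        · ring
      rw [Finset.sum_congr rfl hcongr, Finset.sum_add_distrib,
        Finset.sum_ite_eq' (Finset.range (d - 1)) i₀ (fun i => u - u * γ i), if_pos hmem',
        ← Finset.mul_sum, ← hΓdef, hw₀]
      nlinarith [hu1]
    set Z : ℕ → (Fin d → ℝ) := fun i => if i = i₀ then lam else vert i with hZ
    have hZOrb : ∀ i ∈ Finset.range (d - 1),
        Z i ∈ {μ : Fin d → ℝ | ∃ τ : Equiv.Perm (Fin d), μ = lam ∘ τ} := by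
      intro i _
      rw [hZ]; dsimp only
      split_ifs
      · exact ⟨1, by funext j; simp⟩
      · exact hvertOrb i
    have hsum_pos : 0 < ∑ i ∈ Finset.range (d - 1), W i := by rw [hWsum]; linarith
    have hcm := Finset.centerMass_mem_convexHull (Finset.range (d - 1)) hWnn hsum_pos hZOrb
    have hcmx : (Finset.range (d - 1)).centerMass W Z = x := by
      rw [Finset.centerMass, hWsum, hx]
      congr 1
      have hcongr : ∀ i ∈ Finset.range (d - 1), W i • Z i
          = (u * γ i) • vert i + (if i = i₀ then u • lam - (u * γ i) • vert i else 0) := by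
        intro i _
        rw [hW, hZ]; dsimp only
        split_ifs with h
        · rw [h]; module
        · rw [add_zero]
      rw [Finset.sum_congr rfl hcongr, Finset.sum_add_distrib,
        Finset.sum_ite_eq' (Finset.range (d - 1)) i₀ (fun i => u • lam - (u * γ i) • vert i),
        if_pos hmem', hqrep, hw₀]
      module
    rw [← hcmx]
    exact hcm
  have hq_open : q ∈ openSegment ℝ (vert i₀) x :=
    ⟨w₀, 1 - w₀, hw₀pos, by linarith, by ring, hqx.symm⟩
  have hvseg := hext.2 (hvertP i₀) hxP hqseg hq_open
  obtain ⟨α, β, hα, hβ, hαβ, hcomb⟩ := hvseg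
  set I : Fin d := ⟨i₀, Nat.lt_of_succ_lt hi₀⟩ with hI
  set I1 : Fin d := ⟨i₀ + 1, hi₀⟩ with hI1
  have hII1 : I ≠ I1 := by simp [hI, hI1, Fin.ext_iff]
  have hvertI : vert i₀ = lam ∘ ⇑(Equiv.swap I I1) := by
    rw [hvert]; dsimp only
    rw [dif_pos hi₀]
  have hco : ∀ k : Fin d, α * lam k + β * lam (σ k) = lam (Equiv.swap I I1 k) := by
    intro k
    have h := congr_fun hcomb k
    rw [hvertI] at h
    simpa using h
  have hβne : β ≠ 0 := by
    intro h0
    have h1 : α = 1 := by linarith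
    have h := hco I
    rw [h0, h1, Equiv.swap_apply_left] at h
    simp at h
    exact hII1 (hsort.injective h)
  have hfixout : ∀ k : Fin d, k ≠ I → k ≠ I1 → σ k = k := by
    intro k h1 h2
    have h := hco k
    rw [Equiv.swap_apply_of_ne_of_ne h1 h2] at h
    have hα' : α = 1 - β := by linarith
    rw [hα'] at h
    have h4 : β * (lam (σ k) - lam k) = 0 := by linear_combination h
    rcases mul_eq_zero.1 h4 with h5 | h5
    · exact absurd h5 hβne
    · exact hsort.injective (by linarith)
  have hmemI : ∀ k : Fin d, σ k ≠ I → σ k ≠ I1 → σ k = k := by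
    intro k hc1 hc2
    exact σ.injective (hfixout (σ k) hc1 hc2)
  have hcasesI : σ I = I ∨ σ I = I1 := by
    rcases eq_or_ne (σ I) I with h | h1
    · exact Or.inl h
    rcases eq_or_ne (σ I) I1 with h | h2
    · exact Or.inr h
    · exact absurd (hmemI I h1 h2) h1
  have hcasesI1 : σ I1 = I ∨ σ I1 = I1 := by
    rcases eq_or_ne (σ I1) I with h | h1
    · exact Or.inl h
    rcases eq_or_ne (σ I1) I1 with h | h2
    · exact Or.inr h
    · exact absurd (hmemI I1 h1 h2) h2
  have hσI : σ I = I1 := by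
    rcases hcasesI with h | h
    · exfalso
      have hI1fix : σ I1 = I1 := by
        rcases hcasesI1 with h' | h'
        · exact absurd (σ.injective (h'.trans h.symm)) (Ne.symm hII1)
        · exact h'
      apply hne
      funext k
      simp only [Function.comp_apply]
      rcases eq_or_ne k I with hk | hk1
      · rw [hk, h]
      rcases eq_or_ne k I1 with hk | hk2
      · rw [hk, hI1fix]
      · rw [hfixout k hk1 hk2]
    · exact h
  have hσI1 : σ I1 = I := by
    rcases hcasesI1 with h | h
    · exact h
    · exact absurd (σ.injective (hσI.trans h.symm)) hII1
  refine ⟨i₀, hi₀, ?_⟩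
  funext k
  simp only [Function.comp_apply]
  rcases eq_or_ne k I with hk | hk1
  · rw [hk]
    rw [show Equiv.swap (⟨i₀, Nat.lt_of_succ_lt hi₀⟩ : Fin d) ⟨i₀ + 1, hi₀⟩ I = I1 from
      Equiv.swap_apply_left I I1, hσI]
  rcases eq_or_ne k I1 with hk | hk2
  · rw [hk]
    rw [show Equiv.swap (⟨i₀, Nat.lt_of_succ_lt hi₀⟩ : Fin d) ⟨i₀ + 1, hi₀⟩ I1 = I from
      Equiv.swap_apply_right I I1, hσI1]
  · rw [show Equiv.swap (⟨i₀, Nat.lt_of_succ_lt hi₀⟩ : Fin d) ⟨i₀ + 1, hi₀⟩ k = k from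
      Equiv.swap_apply_of_ne_of_ne hk1 hk2, hfixout k hk1 hk2]

/-- The forward direction: adjacent transpositions give neighbors. -/
lemma forward (lam : Fin d → ℝ) (hsort : StrictAnti lam) (i : ℕ) (hi : i + 1 < d) :
    IsNeighbor (convexHull ℝ {μ : Fin d → ℝ | ∃ τ : Equiv.Perm (Fin d), μ = lam ∘ τ}) lam
      (lam ∘ ⇑(Equiv.swap ⟨i, Nat.lt_of_succ_lt hi⟩ ⟨i + 1, hi⟩)) := by
  classical
  set I : Fin d := ⟨i, Nat.lt_of_succ_lt hi⟩ with hI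
  set I1 : Fin d := ⟨i + 1, hi⟩ with hI1
  set s : Equiv.Perm (Fin d) := Equiv.swap I I1 with hs
  set v : Fin d → ℝ := lam ∘ ⇑s with hv
  have hII1 : I < I1 := by simp [hI, hI1, Fin.lt_def]
  have hlamII1 : lam I1 < lam I := hsort hII1
  set Orb : Set (Fin d → ℝ) := {μ : Fin d → ℝ | ∃ τ : Equiv.Perm (Fin d), μ = lam ∘ τ} with hOrb
  set P := convexHull ℝ Orb with hP
  have hlamOrb : lam ∈ Orb := ⟨1, by funext j; simp⟩
  have hvOrb : v ∈ Orb := ⟨s, rfl⟩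
  have hlamP : lam ∈ P := subset_convexHull ℝ _ hlamOrb
  have hvP : v ∈ P := subset_convexHull ℝ _ hvOrb
  set c : Fin d → ℝ := fun j => if (j : ℕ) ≤ i then -((j : ℕ) : ℝ) else 1 - ((j : ℕ) : ℝ)
    with hc
  set l : (Fin d → ℝ) → ℝ := fun x => ∑ j, c j * x j with hl
  set M : ℝ := ∑ j, c j * lam j with hM
  have hlin : IsLinearMap ℝ l := by
    constructor
    · intro x y
      rw [hl]; dsimp only
      rw [← Finset.sum_add_distrib]
      exact Finset.sum_congr rfl fun j _ => by simp only [Pi.add_apply]; ring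
    · intro r x
      rw [hl]; dsimp only
      rw [Finset.smul_sum]
      exact Finset.sum_congr rfl fun j _ => by simp only [Pi.smul_apply, smul_eq_mul]; ring
  have hcval : ∀ p : Fin d, c p = if (p : ℕ) ≤ i then -((p : ℕ) : ℝ) else 1 - ((p : ℕ) : ℝ) :=
    fun p => rfl
  have hcmono : ∀ p q : Fin d, q ≤ p → c p ≤ c q := by
    intro p q hqp
    have hqp' : (q : ℕ) ≤ (p : ℕ) := hqp
    rw [hcval, hcval]
    by_cases hp : (p : ℕ) ≤ i <;> by_cases hq : (q : ℕ) ≤ i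
    · rw [if_pos hp, if_pos hq]
      have : ((q : ℕ) : ℝ) ≤ ((p : ℕ) : ℝ) := by exact_mod_cast hqp'
      linarith
    · exact absurd (le_trans hqp' hp) hq
    · rw [if_neg hp, if_pos hq]
      have h3 : ((i : ℕ) : ℝ) + 1 ≤ ((p : ℕ) : ℝ) := by exact_mod_cast (by omega : i + 1 ≤ (p : ℕ))
      have h4 : ((q : ℕ) : ℝ) ≤ ((i : ℕ) : ℝ) := by exact_mod_cast hq
      linarith
    · rw [if_neg hp, if_neg hq]
      have : ((q : ℕ) : ℝ) ≤ ((p : ℕ) : ℝ) := by exact_mod_cast hqp'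
      linarith
  have hcstrict : ∀ p q : Fin d, q < p → ¬((q : ℕ) = i ∧ (p : ℕ) = i + 1) → c p < c q := by
    intro p q hqp hnot
    have hqp' : (q : ℕ) < (p : ℕ) := hqp
    rw [hcval, hcval]
    by_cases hp : (p : ℕ) ≤ i <;> by_cases hq : (q : ℕ) ≤ i
    · rw [if_pos hp, if_pos hq]
      have : ((q : ℕ) : ℝ) < ((p : ℕ) : ℝ) := by exact_mod_cast hqp'
      linarith
    · exact absurd (le_trans hqp'.le hp) hq
    · rw [if_neg hp, if_pos hq]
      have h2 : (q : ℕ) + 1 < (p : ℕ) := by omega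
      have h3 : ((q : ℕ) : ℝ) + 1 < ((p : ℕ) : ℝ) := by exact_mod_cast h2
      linarith
    · rw [if_neg hp, if_neg hq]
      have : ((q : ℕ) : ℝ) < ((p : ℕ) : ℝ) := by exact_mod_cast hqp'
      linarith
  have hmv : Monovary c lam := by
    intro p q hpq
    exact hcmono p q (hsort.lt_iff_gt.1 hpq).le
  have hineq : ∀ τ : Equiv.Perm (Fin d), l (lam ∘ ⇑τ) ≤ M :=
    fun τ => hmv.sum_mul_comp_perm_le_sum_mul
  have heqcase : ∀ τ : Equiv.Perm (Fin d), l (lam ∘ ⇑τ) = M → (lam ∘ ⇑τ = lam ∨ lam ∘ ⇑τ = v) := by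
    intro τ hτ
    have hmv2 : Monovary c (lam ∘ ⇑τ) := (hmv.sum_mul_comp_perm_eq_sum_mul_iff).1 hτ
    have hstar : ∀ p q : Fin d, p < q → ¬((p : ℕ) = i ∧ (q : ℕ) = i + 1) → τ p < τ q := by
      intro p q hpq hnot
      rcases lt_trichotomy (τ p) (τ q) with h | h | h
      · exact h
      · exact absurd (τ.injective h) hpq.ne
      · exfalso
        have hlt : (lam ∘ ⇑τ) p < (lam ∘ ⇑τ) q := by
          simp only [Function.comp_apply]
          exact hsort h
        exact absurd (hmv2 hlt) (not_le.2 (hcstrict q p hpq hnot))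
    have hIval : (I : ℕ) = i := rfl
    have hI1val : (I1 : ℕ) = i + 1 := rfl
    by_cases hti : τ I < τ I1
    · left
      have hsm : StrictMono ⇑τ := by
        intro p q hpq
        by_cases hpi : (p : ℕ) = i ∧ (q : ℕ) = i + 1
        · have hp : p = I := Fin.ext hpi.1
          have hq : q = I1 := Fin.ext hpi.2
          rw [hp, hq]
          exact hti
        · exact hstar p q hpq hpi
      funext k
      simp only [Function.comp_apply]
      rw [perm_apply_eq_of_strictMono τ hsm k]
    · right
      have hti' : τ I1 < τ I := by
        rcases lt_trichotomy (τ I) (τ I1) with h | h | h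
        · exact absurd h hti
        · exact absurd (τ.injective h) hII1.ne
        · exact h
      set τ' : Equiv.Perm (Fin d) := τ * s with hτ'
      have hτ'app : ∀ k, τ' k = τ (s k) := fun k => rfl
      have hsm : StrictMono ⇑τ' := by
        intro p q hpq
        rw [hτ'app, hτ'app]
        rcases eq_or_ne p I with hpI | hpI
        · rcases eq_or_ne q I1 with hqI1 | hqI1
          · rw [hpI, hqI1, hs, Equiv.swap_apply_left, Equiv.swap_apply_right]
            exact hti'
          · have hqI : q ≠ I := by
              intro h
              rw [hpI, h] at hpq
              exact lt_irrefl _ hpq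
            have hq : I1 < q := by
              rw [hpI] at hpq
              rw [Fin.lt_def] at hpq ⊢
              have h1 : (q : ℕ) ≠ i + 1 := fun h => hqI1 (Fin.ext h)
              omega
            rw [hpI, hs, Equiv.swap_apply_left, Equiv.swap_apply_of_ne_of_ne hqI hqI1]
            exact hstar I1 q hq (by rw [hI1val]; omega)
        · rcases eq_or_ne p I1 with hpI1 | hpI1
          · have hq1 : I1 < q := hpI1 ▸ hpq
            have hqI : q ≠ I := fun h => absurd (h ▸ hq1) (by simp [Fin.lt_def, hI, hI1])
            have hqI1 : q ≠ I1 := hq1.ne'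
            rw [hpI1, hs, Equiv.swap_apply_right, Equiv.swap_apply_of_ne_of_ne hqI hqI1]
            refine hstar I q (lt_trans hII1 hq1) ?_
            rintro ⟨-, hq⟩
            exact hqI1 (Fin.ext hq)
          · rcases eq_or_ne q I with hqI | hqI
            · have hp1 : p < I := hqI ▸ hpq
              rw [hqI, hs, Equiv.swap_apply_of_ne_of_ne hpI hpI1, Equiv.swap_apply_left]
              refine hstar p I1 (lt_trans hp1 hII1) ?_
              rintro ⟨hp, -⟩
              rw [Fin.lt_def, hIval] at hp1
              omega
            · rcases eq_or_ne q I1 with hqI1 | hqI1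
              · have hp1 : p < I1 := hqI1 ▸ hpq
                have hpltI : p < I := by
                  rw [Fin.lt_def] at hp1 ⊢
                  rw [hIval]
                  rw [hI1val] at hp1
                  have : (p : ℕ) ≠ i := fun h => hpI (Fin.ext h)
                  omega
                rw [hqI1, hs, Equiv.swap_apply_of_ne_of_ne hpI hpI1, Equiv.swap_apply_right]
                refine hstar p I hpltI ?_
                rintro ⟨-, hx⟩
                rw [hIval] at hx
                omega
              · rw [hs, Equiv.swap_apply_of_ne_of_ne hpI hpI1,
                  Equiv.swap_apply_of_ne_of_ne hqI hqI1]
                refine hstar p q hpq ?_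
                rintro ⟨hx, -⟩
                exact hpI (Fin.ext hx)
      have hid : ∀ k, τ (s k) = k := fun k => perm_apply_eq_of_strictMono τ' hsm k
      funext k
      have h1 : τ k = s k := by
        have h2 := hid (s k)
        rwa [Equiv.swap_apply_self] at h2
      simp only [Function.comp_apply, h1]
      rfl
  have hPub : ∀ y ∈ P, l y ≤ M := by
    have hhalf : Convex ℝ {y : Fin d → ℝ | l y ≤ M} := convex_halfSpace_le hlin M
    have hsub : Orb ⊆ {y | l y ≤ M} := by
      rintro y ⟨τ, rfl⟩
      exact hineq τ
    exact fun y hy => convexHull_min hsub hhalf hy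
  have hcI : c I = -((i : ℕ) : ℝ) := by
    rw [hcval]
    exact if_pos (le_refl i)
  have hcI1 : c I1 = -((i : ℕ) : ℝ) := by
    have hIv : (I1 : ℕ) = i + 1 := rfl
    rw [hcval, hIv, if_neg (by omega)]
    push_cast
    ring
  have hcs : ∀ j : Fin d, c (s j) = c j := by
    intro j
    rcases eq_or_ne j I with hj | hj1
    · rw [hj, hs, Equiv.swap_apply_left, hcI, hcI1]
    rcases eq_or_ne j I1 with hj | hj2
    · rw [hj, hs, Equiv.swap_apply_right, hcI, hcI1]
    · rw [hs, Equiv.swap_apply_of_ne_of_ne hj1 hj2]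
  have hlv : l v = M := by
    have h0 := Equiv.sum_comp s (fun j => c j * lam (s j))
    have h1 : ∀ j : Fin d, c (s j) * lam (s (s j)) = c j * lam j := by
      intro j
      rw [hcs j, show s (s j) = j by rw [hs]; exact Equiv.swap_apply_self _ _ _]
    calc l v = ∑ j, c j * lam (s j) := rfl
      _ = ∑ j, c (s j) * lam (s (s j)) := h0.symm
      _ = ∑ j, c j * lam j := Finset.sum_congr rfl (fun j _ => h1 j)
      _ = M := rfl
  set F : Set (Fin d → ℝ) := {x | x ∈ P ∧ l x = M} with hF
  have hFseg : F = segment ℝ lam v := by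
    apply Set.Subset.antisymm
    · rintro x ⟨hxP, hxM⟩
      set t : Finset (Fin d → ℝ) :=
        Finset.image (fun τ : Equiv.Perm (Fin d) => lam ∘ ⇑τ) Finset.univ with ht
      have hOt : Orb = ↑t := by
        ext y
        simp only [hOrb, Set.mem_setOf_eq, ht, Finset.coe_image, Set.mem_image,
          Finset.mem_coe, Finset.mem_univ, Finset.coe_univ, Set.image_univ, Set.mem_range]
        exact ⟨fun ⟨τ, hτ⟩ => ⟨τ, hτ.symm⟩, fun ⟨τ, hτ⟩ => ⟨τ, hτ.symm⟩⟩
      rw [hP, hOt] at hxP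
      obtain ⟨w, hw0, hw1, hwx⟩ := Finset.mem_convexHull'.1 hxP
      have hly : ∀ y ∈ t, l y ≤ M := by
        intro y hy
        obtain ⟨τ, -, rfl⟩ := Finset.mem_image.1 hy
        exact hineq τ
      have hlx : ∑ y ∈ t, w y * l y = M := by
        have hwl : ∀ y, w y * l y = ∑ j, w y * (c j * y j) := by
          intro y
          rw [hl]; dsimp only
          rw [Finset.mul_sum]
        have h1 : l x = ∑ y ∈ t, w y * l y := by
          rw [← hwx]
          calc l (∑ y ∈ t, w y • y)
              = ∑ j, c j * ∑ y ∈ t, w y * y j := by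
                rw [hl]; dsimp only
                apply Finset.sum_congr rfl
                intro j _
                congr 1
                rw [Finset.sum_apply]
                apply Finset.sum_congr rfl
                intro y _
                simp
            _ = ∑ j, ∑ y ∈ t, c j * (w y * y j) := by
                apply Finset.sum_congr rfl
                intro j _
                rw [Finset.mul_sum]
            _ = ∑ y ∈ t, ∑ j, c j * (w y * y j) := Finset.sum_comm
            _ = ∑ y ∈ t, w y * l y := by
                apply Finset.sum_congr rfl
                intro y _
                rw [hwl y]
                apply Finset.sum_congr rfl
                intro j _
                ring
        rw [← h1, hxM]
      have hkey : ∀ y ∈ t, w y ≠ 0 → (y = lam ∨ y = v) := by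
        intro y hy hwne
        have hnn : ∀ z ∈ t, 0 ≤ w z * (M - l z) :=
          fun z hz => mul_nonneg (hw0 z hz) (sub_nonneg.2 (hly z hz))
        have hzero : ∑ z ∈ t, w z * (M - l z) = 0 := by
          have h3 : ∑ z ∈ t, w z * (M - l z)
              = M * (∑ z ∈ t, w z) - ∑ z ∈ t, w z * l z := by
            simp_rw [mul_sub]
            rw [Finset.sum_sub_distrib, ← Finset.sum_mul, mul_comm]
          rw [h3, hw1, hlx]
          ring
        have hterm := (Finset.sum_eq_zero_iff_of_nonneg hnn).1 hzero y hy
        have hlyM : l y = M := by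
          rcases mul_eq_zero.1 hterm with h | h
          · exact absurd h hwne
          · linarith [h]
        obtain ⟨τ, -, rfl⟩ := Finset.mem_image.1 hy
        exact heqcase τ hlyM
      set t' : Finset (Fin d → ℝ) := t.filter (fun y => w y ≠ 0) with ht'
      have hsum1 : ∑ y ∈ t', w y = 1 := by
        rw [ht', Finset.sum_filter_ne_zero, hw1]
      have hx' : t'.centerMass w id = x := by
        rw [Finset.centerMass_eq_of_sum_1 _ _ hsum1, ← hwx, ht']
        apply Finset.sum_filter_of_ne
        intro y _ hne0 h0
        apply hne0
        rw [id_eq, h0, zero_smul]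
      have hseg : x ∈ convexHull ℝ ({lam, v} : Set (Fin d → ℝ)) := by
        rw [← hx']
        apply Finset.centerMass_mem_convexHull
        · intro y hy
          exact hw0 y (Finset.mem_filter.1 hy).1
        · rw [hsum1]
          norm_num
        · intro y hy
          obtain ⟨hyt, hyw⟩ := Finset.mem_filter.1 hy
          rcases hkey y hyt hyw with h | h <;> simp [h]
      rwa [convexHull_pair] at hseg
    · intro z hz
      have hzP : z ∈ P := (convex_convexHull ℝ Orb).segment_subset hlamP hvP hz
      obtain ⟨α, β, hα, hβ, hαβ, hzdef⟩ := hz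
      refine ⟨hzP, ?_⟩
      rw [← hzdef, hlin.map_add, hlin.map_smul, hlin.map_smul, smul_eq_mul, smul_eq_mul,
        show l lam = M from rfl, hlv]
      linear_combination M * hαβ
  have hFext : IsExtreme ℝ P F := by
    constructor
    · exact fun x hx => hx.1
    · rintro x₁ hx₁ x₂ hx₂ z hzF ⟨θ₁, θ₂, hθ₁, hθ₂, hθ, hzdef⟩
      have hl₁ : l x₁ ≤ M := hPub x₁ hx₁
      have hl₂ : l x₂ ≤ M := hPub x₂ hx₂
      have hlz : θ₁ * l x₁ + θ₂ * l x₂ = M := by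
        rw [← hzF.2, ← hzdef, hlin.map_add, hlin.map_smul, hlin.map_smul, smul_eq_mul,
          smul_eq_mul]
      have hMsplit : θ₁ * M + θ₂ * M = M := by rw [← add_mul, hθ, one_mul]
      have hm₂ : θ₂ * l x₂ ≤ θ₂ * M := mul_le_mul_of_nonneg_left hl₂ hθ₂.le
      have hm₁ : θ₁ * l x₁ ≤ θ₁ * M := mul_le_mul_of_nonneg_left hl₁ hθ₁.le
      have h₁ : l x₁ = M := by
        refine le_antisymm hl₁ ?_
        have h6 : θ₁ * M ≤ θ₁ * l x₁ := by linarith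
        exact le_of_mul_le_mul_left h6 hθ₁
      have h₂ : l x₂ = M := by
        refine le_antisymm hl₂ ?_
        have h6 : θ₂ * M ≤ θ₂ * l x₂ := by linarith
        exact le_of_mul_le_mul_left h6 hθ₂
      exact ⟨hx₁, h₁⟩
  constructor
  · intro h
    have h2 := congr_fun h I
    have h3 : v I = lam I1 := by
      rw [hv]
      simp only [Function.comp_apply]
      rw [hs]
      rw [Equiv.swap_apply_left]
    rw [h3] at h2
    exact hII1.ne (hsort.injective h2)
  · show IsExtreme ℝ P (segment ℝ lam v)
    rw [← hFseg]
    exact hFext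

end Stmt3Aux

/-- If `λ ∈ ℝ^d` is sorted strictly decreasingly (pairwise distinct entries), then the
neighbors of the vertex `λ` in the polytope `conv{P_σ λ : σ ∈ Σ_d}` are exactly the
`d−1` vectors obtained from `λ` by transposing adjacent coordinates `i` and `i+1`. -/
theorem stmt3 {d : ℕ} (lam : Fin d → ℝ) (hsort : StrictAnti lam) :
    {v : Fin d → ℝ |
      IsNeighbor (convexHull ℝ {μ : Fin d → ℝ | ∃ σ : Equiv.Perm (Fin d), μ = lam ∘ σ}) lam v}
    = {v : Fin d → ℝ | ∃ (i : ℕ) (hi : i + 1 < d),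
        v = lam ∘ Equiv.swap ⟨i, Nat.lt_of_succ_lt hi⟩ ⟨i + 1, hi⟩} := by
  ext v
  simp only [Set.mem_setOf_eq]
  constructor
  · rintro ⟨hne, hext⟩
    have hvP : v ∈ convexHull ℝ {μ : Fin d → ℝ | ∃ σ : Equiv.Perm (Fin d), μ = lam ∘ σ} :=
      hext.1 (right_mem_segment ℝ lam v)
    have hvex : v ∈ (convexHull ℝ
        {μ : Fin d → ℝ | ∃ σ : Equiv.Perm (Fin d), μ = lam ∘ σ}).extremePoints ℝ := by
      refine ⟨hvP, ?_⟩
      intro x₁ hx₁ x₂ hx₂ hvopen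
      have hx₁s := hext.2 hx₁ hx₂ (right_mem_segment ℝ lam v) hvopen
      have hx₂s := hext.2 hx₂ hx₁ (right_mem_segment ℝ lam v) (by rw [openSegment_symm]; exact hvopen)
      obtain ⟨a₁, b₁, ha₁, hb₁, hab₁, h₁⟩ := hx₁s
      obtain ⟨a₂, b₂, ha₂, hb₂, hab₂, h₂⟩ := hx₂s
      obtain ⟨θ₁, θ₂, hθ₁, hθ₂, hθ, hveq⟩ := hvopen
      have hcomb : (θ₁ * a₁ + θ₂ * a₂) • lam + (θ₁ * b₁ + θ₂ * b₂) • v = v :=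
        calc (θ₁ * a₁ + θ₂ * a₂) • lam + (θ₁ * b₁ + θ₂ * b₂) • v
            = θ₁ • (a₁ • lam + b₁ • v) + θ₂ • (a₂ • lam + b₂ • v) := by module
          _ = θ₁ • x₁ + θ₂ • x₂ := by rw [h₁, h₂]
          _ = v := hveq
      have hA : (θ₁ * a₁ + θ₂ * a₂) + (θ₁ * b₁ + θ₂ * b₂) = 1 := by
        linear_combination θ₁ * hab₁ + θ₂ * hab₂ + hθ
      set A : ℝ := θ₁ * a₁ + θ₂ * a₂ with hA'
      have hAzero : A = 0 ∨ lam = v := by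
        have h5 : A • lam + (1 - A) • v = v := by
          rw [show (1 : ℝ) - A = θ₁ * b₁ + θ₂ * b₂ by linarith]
          exact hcomb
        have h6 : A • (lam - v) = 0 := by
          have h7 : A • lam + (1 - A) • v - v = 0 := by
            rw [h5]
            simp
          calc A • (lam - v) = A • lam + (1 - A) • v - v := by module
            _ = 0 := h7
        rcases smul_eq_zero.1 h6 with h | h
        · exact Or.inl h
        · exact Or.inr (sub_eq_zero.1 h)
      have hA0 : A = 0 := hAzero.resolve_right hne
      have hnn₁ : 0 ≤ θ₁ * a₁ := mul_nonneg hθ₁.le ha₁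
      have hnn₂ : 0 ≤ θ₂ * a₂ := mul_nonneg hθ₂.le ha₂
      have hz₁ : θ₁ * a₁ = 0 := by rw [hA'] at hA0; linarith
      have hz₂ : θ₂ * a₂ = 0 := by rw [hA'] at hA0; linarith
      have ha₁0 : a₁ = 0 := by
        rcases mul_eq_zero.1 hz₁ with h | h
        · exact absurd h hθ₁.ne'
        · exact h
      have ha₂0 : a₂ = 0 := by
        rcases mul_eq_zero.1 hz₂ with h | h
        · exact absurd h hθ₂.ne'
        · exact h
      rw [← h₁, ha₁0, show b₁ = 1 by linarith]
      simp
    have hvorb := extremePoints_convexHull_subset hvex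
    obtain ⟨σ, rfl⟩ := hvorb
    have hne' : lam ∘ ⇑σ ≠ lam := fun h => hne h.symm
    exact Stmt3Aux.backward lam hsort σ hne' hext
  · rintro ⟨i, hi, rfl⟩
    exact Stmt3Aux.forward lam hsort i hi
end

section
/- The source volume V_s(λ), given by the formula V_s(λ) = (√d/(d!(d−1)!))·Σ_{σ∈Σ_d}(Σ_k σ(k)λ_k − (d+1)/2)^{d−1}/∏_k(σ(k)−σ(k+1)) on vectors with distinct entries, extends continuously to sorted probability vectors with repeated entries: for any sorted λ and any strictly decreasing sorted probability vector λ̃, the limit as ε→0+ of V_s((1−ε)λ + ελ̃) equals the same polynomial expression evaluated at λ. -/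
/-- The polynomial source-volume formula
`V_s(x) = (√(d+1)/((d+1)!·d!))·Σ_σ (Σ_k σ(k)x_k − (d+2)/2)^d / ∏_k(σ(k)−σ(k+1))`
(1-based permutation values, vectors in `ℝ^(d+1)`). -/
noncomputable def VsPoly (d : ℕ) (x : Fin (d + 1) → ℝ) : ℝ :=
  (Real.sqrt ((d : ℝ) + 1) / ((d + 1).factorial * d.factorial)) *
    ∑ σ : Equiv.Perm (Fin (d + 1)),
      ((∑ k : Fin (d + 1), (((σ k : ℕ) : ℝ) + 1) * x k) - ((d : ℝ) + 2) / 2) ^ d /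
        ∏ k : Fin d, (((σ k.castSucc : ℕ) : ℝ) - ((σ k.succ : ℕ) : ℝ))

/-- The general form of the source-volume formula, including the sign factors
`∏_k |x_k − x_{k+1}|/(x_k − x_{k+1})`, valid on vectors with distinct entries. -/
noncomputable def VsGen (d : ℕ) (x : Fin (d + 1) → ℝ) : ℝ :=
  (∏ k : Fin d, |x k.castSucc - x k.succ| / (x k.castSucc - x k.succ)) * VsPoly d x

/-- The source volume formula (with sign factors), defined on vectors with distinct
entries, extends continuously to sorted probability vectors with repeated entries: for
any sorted probability vector `λ` and any strictly decreasing sorted probability vector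
`λ̃`, the limit as `ε → 0⁺` of `V_s((1−ε)λ + ελ̃)` equals the polynomial expression
evaluated at `λ`. -/
theorem stmt10 (d : ℕ) (lam : Fin (d + 1) → ℝ)
    (hsort : ∀ i j, i ≤ j → lam j ≤ lam i) (hnn : ∀ i, 0 ≤ lam i)
    (hsum : ∑ i, lam i = 1)
    (tlam : Fin (d + 1) → ℝ) (htstrict : StrictAnti tlam) (htnn : ∀ i, 0 ≤ tlam i)
    (htsum : ∑ i, tlam i = 1) :
    Filter.Tendsto (fun ε : ℝ => VsGen d (fun i => (1 - ε) * lam i + ε * tlam i))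
      (nhdsWithin 0 (Set.Ioi 0)) (nhds (VsPoly d lam)) := by
  have hcont : Continuous (VsPoly d) := by
    unfold VsPoly
    fun_prop
  have hmap : Filter.Tendsto (fun ε : ℝ => fun i => (1 - ε) * lam i + ε * tlam i)
      (nhds 0) (nhds lam) := by
    have hc : Continuous fun ε : ℝ => fun i : Fin (d + 1) => (1 - ε) * lam i + ε * tlam i := by
      fun_prop
    have h := hc.tendsto 0
    simpa using h
  have hmain : Filter.Tendsto
      (fun ε : ℝ => VsPoly d (fun i => (1 - ε) * lam i + ε * tlam i))
      (nhdsWithin 0 (Set.Ioi 0)) (nhds (VsPoly d lam)) :=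
    ((hcont.tendsto lam).comp hmap).mono_left nhdsWithin_le_nhds
  refine hmain.congr' ?_
  filter_upwards [Ioo_mem_nhdsGT_of_mem (by norm_num : (0:ℝ) ∈ Set.Ico 0 1)] with ε hε
  unfold VsGen
  have hpos : ∀ k : Fin d, 0 < ((1 - ε) * lam k.castSucc + ε * tlam k.castSucc)
      - ((1 - ε) * lam k.succ + ε * tlam k.succ) := by
    intro k
    have h1 : lam k.succ ≤ lam k.castSucc := hsort _ _ (le_of_lt (Fin.castSucc_lt_succ : k.castSucc < k.succ))
    have h2 : tlam k.succ < tlam k.castSucc := htstrict (Fin.castSucc_lt_succ : k.castSucc < k.succ)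
    nlinarith [hε.1, hε.2]
  have hprod : (∏ k : Fin d,
      |((1 - ε) * lam k.castSucc + ε * tlam k.castSucc)
        - ((1 - ε) * lam k.succ + ε * tlam k.succ)| /
      (((1 - ε) * lam k.castSucc + ε * tlam k.castSucc)
        - ((1 - ε) * lam k.succ + ε * tlam k.succ))) = 1 := by
    apply Finset.prod_eq_one
    intro k _
    rw [abs_of_pos (hpos k), div_self (hpos k).ne']
  rw [hprod, one_mul]
end

section
/- For a sorted probability vector λ = (λ_1,…,λ_d) with strictly decreasing entries, each vector v_i = (λ_1,…,λ_i, λ_i, …, λ_i, λ_norm, 0,…,0) — coinciding with λ in the first i entries, then repeating λ_i, followed by a remainder λ_norm ∈ [0, λ_i] making the total sum 1 and zeros — majorizes λ and is a vertex of the accessible polytope {μ ∈ ℝ^{d} : μ sorted, λ ≺ μ}, as it satisfies d−1 independent defining inequalities with equality. -/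
private lemma combo_le {t s A B A' B' : ℝ} (ht : 0 < t) (hs : 0 < s)
    (hA : A ≤ A') (hB : B ≤ B') (h : t * A + s * B = t * A' + s * B') :
    A = A' ∧ B = B' := by
  constructor <;> nlinarith

private lemma sum_if_succ {d : ℕ} (k : ℕ) (hk : k < d) (x : Fin d → ℝ) :
    (∑ i : Fin d, if (i : ℕ) < k + 1 then x i else 0)
      = (∑ i : Fin d, if (i : ℕ) < k then x i else 0) + x ⟨k, hk⟩ := by
  have h : ∀ i : Fin d, (if (i : ℕ) < k + 1 then x i else 0)
      = (if (i : ℕ) < k then x i else 0) + (if i = ⟨k, hk⟩ then x i else 0) := by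
    intro i
    rcases eq_or_ne i ⟨k, hk⟩ with h | h
    · subst h; simp
    · have h' : (i : ℕ) ≠ k := fun hh => h (Fin.ext hh)
      by_cases h2 : (i : ℕ) < k
      · have h3 : (i : ℕ) < k + 1 := by omega
        simp [h2, h, h3]
      · have h3 : ¬ (i : ℕ) < k + 1 := by omega
        simp [h2, h, h3]
  rw [Finset.sum_congr rfl fun i _ => h i, Finset.sum_add_distrib,
    Finset.sum_ite_eq' Finset.univ ⟨k, hk⟩ x]
  simp

/-- For a sorted probability vector `λ` with strictly decreasing entries, each vector
`v` coinciding with `λ` on the first entries (indices `≤ a`), then repeating `λ_a`,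
followed by a remainder `λ_norm ∈ [0, λ_a]` making the total sum `1`, and then zeros,
majorizes `λ` and is a vertex (extreme point) of the accessible polytope
`{μ : μ sorted, λ ≺ μ}`. -/
theorem stmt15 (d : ℕ) (lam : Fin d → ℝ) (hstrict : StrictAnti lam)
    (hnn : ∀ i, 0 ≤ lam i) (hsum : ∑ i, lam i = 1)
    (a b : ℕ) (hab : a < b) (hbd : b < d) (lnorm : ℝ)
    (hln0 : 0 ≤ lnorm) (hln : lnorm ≤ lam ⟨a, by omega⟩)
    (v : Fin d → ℝ)
    (hv : ∀ j : Fin d, v j =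
      if (j : ℕ) ≤ a then lam j
      else if (j : ℕ) < b then lam ⟨a, by omega⟩
      else if (j : ℕ) = b then lnorm
      else 0)
    (hvsum : ∑ j, v j = 1) :
    ((∀ k : ℕ, (∑ i : Fin d, if (i : ℕ) < k then lam i else 0)
        ≤ ∑ i : Fin d, if (i : ℕ) < k then v i else 0) ∧
      (∑ i, lam i) = ∑ i, v i) ∧
    v ∈ Set.extremePoints ℝ {μ : Fin d → ℝ |
        (∀ i j, i ≤ j → μ j ≤ μ i) ∧ (∀ i, 0 ≤ μ i) ∧ (∑ i, μ i = 1) ∧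
        ∀ k : ℕ, (∑ i : Fin d, if (i : ℕ) < k then lam i else 0)
          ≤ ∑ i : Fin d, if (i : ℕ) < k then μ i else 0} := by
  have had : a < d := by omega
  set A : Fin d := ⟨a, had⟩ with hA
  set B : Fin d := ⟨b, hbd⟩ with hB
  -- basic values of v
  have hva : ∀ i : Fin d, (i : ℕ) ≤ a → v i = lam i := by
    intro i hi; rw [hv]; simp [hi]
  have hvm : ∀ i : Fin d, a < (i : ℕ) → (i : ℕ) < b → v i = lam A := by
    intro i h1 h2; rw [hv]; simp [Nat.not_le.mpr h1, h2]
  have hvb : v B = lnorm := by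
    rw [hv]; simp [hB]; omega
  have hv0 : ∀ i : Fin d, b < (i : ℕ) → v i = 0 := by
    intro i hi; rw [hv]
    have h1 : ¬ (i : ℕ) ≤ a := by omega
    have h2 : ¬ (i : ℕ) < b := by omega
    have h3 : (i : ℕ) ≠ b := by omega
    simp [h1, h2, h3]
  have hlamA : ∀ i : Fin d, a ≤ (i : ℕ) → lam i ≤ lam A :=
    fun i hi => hstrict.antitone (by simpa [Fin.le_def, hA] using hi)
  have hlamA' : ∀ i : Fin d, (i : ℕ) ≤ a → lam A ≤ lam i :=
    fun i hi => hstrict.antitone (by simpa [Fin.le_def, hA] using hi)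
  -- sortedness of v
  have hvmono : ∀ i j : Fin d, i ≤ j → v j ≤ v i := by
    intro i j hij
    have hij' : (i : ℕ) ≤ (j : ℕ) := hij
    rw [hv i, hv j]
    split_ifs with h1 h2 h3 h4 h5 h6 h7 h8 h9 <;>
      first
        | exact hstrict.antitone hij
        | exact le_refl _
        | omega
        | (first
            | exact hlamA' i (by omega)
            | exact le_trans hln (hlamA' i (by omega))
            | exact hln
            | exact le_trans hln0 (le_trans hln (hlamA' i (by omega)))
            | exact le_trans hln0 hln
            | exact hln0
            | exact hnn j
            | exact hnn i)
  -- nonnegativity of v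
  have hvnn : ∀ i : Fin d, 0 ≤ v i := by
    intro i; rw [hv]
    split_ifs <;> first | exact hnn _ | exact hln0 | exact le_refl 0
  -- majorization
  have hmaj : ∀ k : ℕ, (∑ i : Fin d, if (i : ℕ) < k then lam i else 0)
      ≤ ∑ i : Fin d, if (i : ℕ) < k then v i else 0 := by
    intro k
    by_cases hk : k ≤ b
    · apply Finset.sum_le_sum
      intro i _
      split_ifs with h
      · rw [hv]
        split_ifs with h1 h2 h3
        · exact le_refl _
        · exact hlamA i (by omega)
        · omega
        · omega
      · exact le_refl 0
    · have h1 : (∑ i : Fin d, if (i : ℕ) < k then v i else 0) = ∑ i, v i := by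
        apply Finset.sum_congr rfl
        intro i _
        split_ifs with h
        · rfl
        · exact (hv0 i (by omega)).symm
      rw [h1, hvsum]
      calc (∑ i : Fin d, if (i : ℕ) < k then lam i else 0)
          ≤ ∑ i, lam i := by
            apply Finset.sum_le_sum
            intro i _
            split_ifs
            · exact le_refl _
            · exact hnn i
        _ = 1 := hsum
  refine ⟨⟨hmaj, by rw [hsum, hvsum]⟩, ?_⟩
  have hvmem : v ∈ {μ : Fin d → ℝ |
      (∀ i j, i ≤ j → μ j ≤ μ i) ∧ (∀ i, 0 ≤ μ i) ∧ (∑ i, μ i = 1) ∧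
      ∀ k : ℕ, (∑ i : Fin d, if (i : ℕ) < k then lam i else 0)
        ≤ ∑ i : Fin d, if (i : ℕ) < k then μ i else 0} :=
    ⟨hvmono, hvnn, hvsum, hmaj⟩
  rw [mem_extremePoints]
  refine ⟨hvmem, ?_⟩
  intro x hx y hy hseg
  obtain ⟨hxmono, hxnn, hxsum, hxmaj⟩ := hx
  obtain ⟨hymono, hynn, hysum, hymaj⟩ := hy
  obtain ⟨t, s, ht, hs, hts, hxy⟩ := hseg
  have hpt : ∀ j : Fin d, t * x j + s * y j = v j := by
    intro j
    have := congrFun hxy j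
    simpa using this
  -- P k v = P k lam for k ≤ a + 1
  have hPv : ∀ k : ℕ, k ≤ a + 1 →
      (∑ i : Fin d, if (i : ℕ) < k then v i else 0)
        = ∑ i : Fin d, if (i : ℕ) < k then lam i else 0 := by
    intro k hk
    apply Finset.sum_congr rfl
    intro i _
    split_ifs with h
    · exact hva i (by omega)
    · rfl
  -- linearity of partial sums
  have hPlin : ∀ k : ℕ,
      t * (∑ i : Fin d, if (i : ℕ) < k then x i else 0)
        + s * (∑ i : Fin d, if (i : ℕ) < k then y i else 0)
        = ∑ i : Fin d, if (i : ℕ) < k then v i else 0 := by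
    intro k
    rw [Finset.mul_sum, Finset.mul_sum, ← Finset.sum_add_distrib]
    apply Finset.sum_congr rfl
    intro i _
    split_ifs with h
    · exact hpt i
    · simp
  -- partial sums of x and y equal those of lam up to a+1
  have hPxy : ∀ k : ℕ, k ≤ a + 1 →
      (∑ i : Fin d, if (i : ℕ) < k then x i else 0)
        = (∑ i : Fin d, if (i : ℕ) < k then lam i else 0) ∧
      (∑ i : Fin d, if (i : ℕ) < k then y i else 0)
        = (∑ i : Fin d, if (i : ℕ) < k then lam i else 0) := by
    intro k hk
    have h := hPlin k
    rw [hPv k hk] at h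
    have hc := combo_le ht hs (hxmaj k) (hymaj k)
      (by rw [h, ← add_mul, hts, one_mul])
    exact ⟨hc.1.symm, hc.2.symm⟩
  -- entries of x and y agree with lam for indices ≤ a
  have hxa : ∀ j : Fin d, (j : ℕ) ≤ a → x j = lam j := by
    intro j hj
    have h1 := (hPxy ((j : ℕ) + 1) (by omega)).1
    have h2 := (hPxy (j : ℕ) (by omega)).1
    have e1 := sum_if_succ (d := d) (j : ℕ) j.isLt x
    have e2 := sum_if_succ (d := d) (j : ℕ) j.isLt lam
    rw [h1, h2] at e1
    rw [e2] at e1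
    have : x ⟨(j : ℕ), j.isLt⟩ = lam ⟨(j : ℕ), j.isLt⟩ := by linarith
    simpa using this
  have hya : ∀ j : Fin d, (j : ℕ) ≤ a → y j = lam j := by
    intro j hj
    have h1 := (hPxy ((j : ℕ) + 1) (by omega)).2
    have h2 := (hPxy (j : ℕ) (by omega)).2
    have e1 := sum_if_succ (d := d) (j : ℕ) j.isLt y
    have e2 := sum_if_succ (d := d) (j : ℕ) j.isLt lam
    rw [h1, h2] at e1
    rw [e2] at e1
    have : y ⟨(j : ℕ), j.isLt⟩ = lam ⟨(j : ℕ), j.isLt⟩ := by linarith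
    simpa using this
  -- middle entries
  have hmid : ∀ j : Fin d, a < (j : ℕ) → (j : ℕ) < b → x j = v j ∧ y j = v j := by
    intro j h1 h2
    have hAj : A ≤ j := by simp [Fin.le_def, hA]; omega
    have hx' : x j ≤ x A := hxmono A j hAj
    have hy' : y j ≤ y A := hymono A j hAj
    have hvA : v A = lam A := hva A (le_refl a)
    have hvj : v j = lam A := hvm j h1 h2
    have hxA : x A = lam A := hxa A (le_refl a)
    have hyA : y A = lam A := hya A (le_refl a)
    have heq : t * x j + s * y j = t * x A + s * y A := by
      rw [hpt j, hpt A, hvA, hvj]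
    have hc := combo_le ht hs hx' hy' heq
    exact ⟨by rw [hc.1, hxA, hvj], by rw [hc.2, hyA, hvj]⟩
  -- zero entries
  have hzero : ∀ j : Fin d, b < (j : ℕ) → x j = 0 ∧ y j = 0 := by
    intro j hj
    have h := hpt j
    rw [hv0 j hj] at h
    constructor <;> nlinarith [hxnn j, hynn j, ht.le, hs.le]
  -- entry b via the total sum
  have hxb : x B = v B := by
    have hall : ∀ j : Fin d, j ≠ B → x j - v j = 0 := by
      intro j hj
      have hjb : (j : ℕ) ≠ b := fun h => hj (Fin.ext h)
      rcases Nat.lt_or_ge (j : ℕ) b with h | h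
      · rcases le_or_gt (j : ℕ) a with h' | h'
        · rw [hxa j h', hva j h']; ring
        · rw [(hmid j h' h).1]; ring
      · have hb : b < (j : ℕ) := by omega
        rw [(hzero j hb).1, hv0 j hb]; ring
    have hsum0 : ∑ j, (x j - v j) = 0 := by
      rw [Finset.sum_sub_distrib, hxsum, hvsum]; ring
    have := Finset.sum_eq_single (s := Finset.univ) B (fun j _ hj => hall j hj)
      (fun h => absurd (Finset.mem_univ B) h)
    rw [this] at hsum0
    linarith
  have hyb : y B = v B := by
    have hall : ∀ j : Fin d, j ≠ B → y j - v j = 0 := by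
      intro j hj
      have hjb : (j : ℕ) ≠ b := fun h => hj (Fin.ext h)
      rcases Nat.lt_or_ge (j : ℕ) b with h | h
      · rcases le_or_gt (j : ℕ) a with h' | h'
        · rw [hya j h', hva j h']; ring
        · rw [(hmid j h' h).2]; ring
      · have hb : b < (j : ℕ) := by omega
        rw [(hzero j hb).2, hv0 j hb]; ring
    have hsum0 : ∑ j, (y j - v j) = 0 := by
      rw [Finset.sum_sub_distrib, hysum, hvsum]; ring
    have := Finset.sum_eq_single (s := Finset.univ) B (fun j _ hj => hall j hj)
      (fun h => absurd (Finset.mem_univ B) h)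
    rw [this] at hsum0
    linarith
  constructor
  · funext j
    rcases le_or_gt (j : ℕ) a with h | h
    · rw [hxa j h, hva j h]
    rcases Nat.lt_or_ge (j : ℕ) b with h' | h'
    · exact (hmid j h h').1
    rcases Nat.eq_or_lt_of_le h' with h'' | h''
    · have : j = B := Fin.ext h''.symm
      rw [this, hxb]
    · rw [(hzero j h'').1, hv0 j h'']
  · funext j
    rcases le_or_gt (j : ℕ) a with h | h
    · rw [hya j h, hva j h]
    rcases Nat.lt_or_ge (j : ℕ) b with h' | h'
    · exact (hmid j h h').2
    rcases Nat.eq_or_lt_of_le h' with h'' | h''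
    · have : j = B := Fin.ext h''.symm
      rw [this, hyb]
    · rw [(hzero j h'').2, hv0 j h'']
end

section
/- The triple integral ∫₀¹∫₀^{r₂}∫_{−1+r₁+r₂}^{1+r₁−r₂} dr₃ dr₁ dr₂ + ∫₀¹∫_{r₂}¹∫_{−1+r₁+r₂}^{1−r₁+r₂} dr₃ dr₁ dr₂ equals 2/3; consequently, the volume of the region {(r₁,r₂,r₃) : 0 ≤ r₁ ≤ 1, 0 ≤ r₂ ≤ 1, 1+r₁−r₂−r₃ ≥ 0, 1−r₁+r₂−r₃ ≥ 0, 1−r₁−r₂+r₃ ≥ 0, −1 ≤ r₃ ≤ 1} is 2/3. -/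
open MeasureTheory

section Stmt19Aux
open Set

theorem vol_cc {α : Type*} [MeasurableSpace α] (μ : Measure α) [SigmaFinite μ] {f g : α → ℝ}
    {s : Set α} (hf : Measurable f) (hg : Measurable g) (hs : MeasurableSet s) :
    μ.prod volume {p : α × ℝ | p.1 ∈ s ∧ p.2 ∈ Icc (f p.1) (g p.1)} =
      ∫⁻ y in s, ENNReal.ofReal (g y - f y) ∂μ := by
  rw [Measure.prod_apply (measurableSet_region_between_cc hf hg hs)]
  have h : (fun x => volume {a | x ∈ s ∧ a ∈ Icc (f x) (g x)}) =
      s.indicator fun x => ENNReal.ofReal (g x - f x) := by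
    classical
    funext x
    rw [Set.indicator_apply]
    split_ifs with h
    · have hx : {a | x ∈ s ∧ a ∈ Icc (f x) (g x)} = Icc (f x) (g x) := by
        ext a; simp [h]
      rw [hx, Real.volume_Icc]
    · have hx : {a | x ∈ s ∧ a ∈ Icc (f x) (g x)} = ∅ := by
        ext a; simp [h]
      rw [show {a | x ∈ s ∧ a ∈ Icc (f x) (g x)} = ∅ from hx]
      simp
  simp only [preimage_setOf_eq]
  rw [h, lintegral_indicator hs]

theorem inner_int {x : ℝ} (hx0 : 0 ≤ x) (hx1 : x ≤ 1) :
    (∫ y in Icc (0:ℝ) 1, (2 - 2 * max x y)) = 1 - x^2 := by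
  rw [integral_Icc_eq_integral_Ioc, ← intervalIntegral.integral_of_le (by norm_num : (0:ℝ) ≤ 1)]
  have cmax : Continuous fun y : ℝ => 2 - 2 * max x y := by fun_prop
  rw [← intervalIntegral.integral_add_adjacent_intervals
    (b := x) (cmax.intervalIntegrable _ _) (cmax.intervalIntegrable _ _)]
  rw [intervalIntegral.integral_congr (g := fun _ : ℝ => (2 - 2*x : ℝ)) (fun y hy => by
      rw [Set.uIcc_of_le hx0] at hy
      rw [max_eq_left hy.2]),
    intervalIntegral.integral_congr (a := x) (b := 1) (g := fun y : ℝ => (2 - 2*y : ℝ))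
      (fun y hy => by
      rw [Set.uIcc_of_le hx1] at hy
      rw [max_eq_right hy.1]),
    intervalIntegral.integral_const,
    intervalIntegral.integral_sub (intervalIntegrable_const)
      (Continuous.intervalIntegrable (by continuity) _ _),
    intervalIntegral.integral_const_mul, integral_id, intervalIntegral.integral_const,
    smul_eq_mul, smul_eq_mul]
  ring

theorem int_prod : (∫ p in (Icc (0:ℝ) 1) ×ˢ (Icc (0:ℝ) 1), (2 - 2 * max p.1 p.2)) = 2/3 := by
  rw [Measure.volume_eq_prod, setIntegral_prod]
  · rw [setIntegral_congr_fun measurableSet_Icc (g := fun x : ℝ => 1 - x^2)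
      (fun x hx => inner_int hx.1 hx.2)]
    rw [integral_Icc_eq_integral_Ioc, ← intervalIntegral.integral_of_le (by norm_num : (0:ℝ) ≤ 1),
      intervalIntegral.integral_sub (intervalIntegrable_const)
        (Continuous.intervalIntegrable (by continuity) _ _),
      intervalIntegral.integral_const, integral_pow]
    norm_num
  · rw [← Measure.volume_eq_prod]
    have c2 : Continuous fun p : ℝ × ℝ => 2 - 2 * max p.1 p.2 := by fun_prop
    exact (c2.continuousOn).integrableOn_compact (isCompact_Icc.prod isCompact_Icc)

theorem int_pi : (∫ x in Icc (0:Fin 2 → ℝ) 1, (2 - 2 * max (x 0) (x 1))) = 2/3 := by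
  rw [← ((volume_preserving_finTwoArrow ℝ).symm _).setIntegral_preimage_emb
      (MeasurableEquiv.measurableEmbedding _)
      (fun x => 2 - 2 * max (x 0) (x 1)) _]
  have hpre : ((MeasurableEquiv.finTwoArrow (α := ℝ)).symm) ⁻¹' (Icc (0:Fin 2 → ℝ) 1)
      = (Icc (0:ℝ) 1) ×ˢ (Icc (0:ℝ) 1) := by
    ext p
    simp [MeasurableEquiv.finTwoArrow, MeasurableEquiv.piFinTwo, Pi.le_def, Fin.forall_fin_two,
      Prod.le_def]
  rw [hpre, ← int_prod]
  apply setIntegral_congr_fun (measurableSet_Icc.prod measurableSet_Icc)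
  intro p _
  simp [MeasurableEquiv.finTwoArrow, MeasurableEquiv.piFinTwo]

theorem stmt19_part2 :
    volume {r : Fin 3 → ℝ |
        0 ≤ r 0 ∧ r 0 ≤ 1 ∧ 0 ≤ r 1 ∧ r 1 ≤ 1 ∧
        0 ≤ 1 + r 0 - r 1 - r 2 ∧ 0 ≤ 1 - r 0 + r 1 - r 2 ∧ 0 ≤ 1 - r 0 - r 1 + r 2 ∧
        -1 ≤ r 2 ∧ r 2 ≤ 1} = ENNReal.ofReal (2 / 3) := by
  have hfm : Measurable (fun x : Fin 2 → ℝ => -1 + x 0 + x 1) := by fun_prop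
  have hgm : Measurable (fun x : Fin 2 → ℝ => 1 - |x 0 - x 1|) := by fun_prop
  set T : Set ((Fin 2 → ℝ) × ℝ) :=
    {p | p.1 ∈ Icc (0:Fin 2 → ℝ) 1 ∧
      p.2 ∈ Icc (-1 + p.1 0 + p.1 1) (1 - |p.1 0 - p.1 1|)} with hTdef
  have hT : MeasurableSet T := measurableSet_region_between_cc hfm hgm measurableSet_Icc
  have hF : MeasurePreserving
      (fun r : Fin 3 → ℝ => Prod.swap (MeasurableEquiv.piFinSuccAbove (fun _ => ℝ) 2 r))
      volume (volume.prod volume) := by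
    have h2 : MeasurePreserving (Prod.swap : ℝ × (Fin 2 → ℝ) → (Fin 2 → ℝ) × ℝ)
        volume (volume.prod volume) := by
      rw [Measure.volume_eq_prod]; exact Measure.measurePreserving_swap
    exact h2.comp (volume_preserving_piFinSuccAbove (fun _ => ℝ) 2)
  have heq : ∀ r : Fin 3 → ℝ, (MeasurableEquiv.piFinSuccAbove (fun _ : Fin 3 => ℝ) 2 r)
      = (r 2, fun j : Fin 2 => r j.castSucc) := by
    intro r
    simp [MeasurableEquiv.piFinSuccAbove]
    refine Prod.ext rfl (funext fun j => ?_)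
    fin_cases j <;> rfl
  have hS : {r : Fin 3 → ℝ |
        0 ≤ r 0 ∧ r 0 ≤ 1 ∧ 0 ≤ r 1 ∧ r 1 ≤ 1 ∧
        0 ≤ 1 + r 0 - r 1 - r 2 ∧ 0 ≤ 1 - r 0 + r 1 - r 2 ∧ 0 ≤ 1 - r 0 - r 1 + r 2 ∧
        -1 ≤ r 2 ∧ r 2 ≤ 1}
      = (fun r : Fin 3 → ℝ => Prod.swap (MeasurableEquiv.piFinSuccAbove (fun _ => ℝ) 2 r))
        ⁻¹' T := by
    ext r
    simp only [mem_setOf_eq, mem_preimage, heq, Prod.swap_prod_mk, hTdef, mem_Icc, Pi.le_def,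
      Fin.forall_fin_two, Pi.zero_apply, Pi.one_apply, Fin.castSucc_zero, Fin.castSucc_one]
    constructor
    · rintro ⟨h1, h2, h3, h4, h5, h6, h7, h8, h9⟩
      refine ⟨⟨⟨h1, h3⟩, h2, h4⟩, by linarith, ?_⟩
      rcases abs_cases (r 0 - r 1) with ⟨ha, _⟩ | ⟨ha, _⟩ <;> linarith
    · rintro ⟨⟨⟨h1, h3⟩, h2, h4⟩, h5, h6⟩
      rcases abs_cases (r 0 - r 1) with ⟨ha, _⟩ | ⟨ha, _⟩ <;>
        refine ⟨h1, h2, h3, h4, by linarith, by linarith, by linarith, by linarith, by linarith⟩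
  rw [hS, hF.measure_preimage hT.nullMeasurableSet]
  rw [show T = {p : (Fin 2 → ℝ) × ℝ | p.1 ∈ Icc (0:Fin 2 → ℝ) 1 ∧
      p.2 ∈ Icc ((fun x : Fin 2 → ℝ => -1 + x 0 + x 1) p.1)
        ((fun x : Fin 2 → ℝ => 1 - |x 0 - x 1|) p.1)} from rfl,
    vol_cc volume hfm hgm measurableSet_Icc]
  have hid : ∀ x : Fin 2 → ℝ, (1 - |x 0 - x 1|) - (-1 + x 0 + x 1) = 2 - 2 * max (x 0) (x 1) := by
    intro x
    rcases max_cases (x 0) (x 1) with ⟨hm, _⟩ | ⟨hm, _⟩ <;> rw [hm] <;>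
      rcases abs_cases (x 0 - x 1) with ⟨ha, _⟩ | ⟨ha, _⟩ <;> linarith
  simp_rw [hid]
  have hc : Continuous (fun x : Fin 2 → ℝ => 2 - 2 * max (x 0) (x 1)) := by fun_prop
  rw [← ofReal_integral_eq_lintegral_ofReal (hc.continuousOn.integrableOn_compact isCompact_Icc)
      ((ae_restrict_iff' measurableSet_Icc).2 (Filter.Eventually.of_forall fun x hx => by
        have := (hx.2 : x ≤ 1); have h0 := this 0; have h1 := this 1
        simp only [Pi.one_apply] at h0 h1
        show (0:ℝ) ≤ 2 - 2 * max (x 0) (x 1)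
        rcases max_cases (x 0) (x 1) with ⟨hm, _⟩ | ⟨hm, _⟩ <;> rw [hm] <;> linarith)),
    int_pi]

end Stmt19Aux

theorem stmt19_part1 : (∫ r2 in (0 : ℝ)..1, ∫ r1 in (0 : ℝ)..r2,
        ∫ _r3 in (-1 + r1 + r2)..(1 + r1 - r2), (1 : ℝ)) +
      (∫ r2 in (0 : ℝ)..1, ∫ r1 in r2..(1 : ℝ),
        ∫ _r3 in (-1 + r1 + r2)..(1 - r1 + r2), (1 : ℝ)) = 2 / 3 := by
  have key : ∀ c d e : ℝ, (∫ x in (0:ℝ)..1, (c + d*x + e*x^2)) = c + d/2 + e/3 := by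
    intro c d e
    rw [intervalIntegral.integral_add
        (Continuous.intervalIntegrable (by continuity) _ _)
        (Continuous.intervalIntegrable (by continuity) _ _),
      intervalIntegral.integral_add (intervalIntegrable_const)
        (Continuous.intervalIntegrable (by continuity) _ _),
      intervalIntegral.integral_const_mul, intervalIntegral.integral_const_mul,
      intervalIntegral.integral_const, integral_id, integral_pow]
    norm_num
    ring
  have h1 : (∫ r2 in (0 : ℝ)..1, ∫ r1 in (0 : ℝ)..r2,
        ∫ _r3 in (-1 + r1 + r2)..(1 + r1 - r2), (1 : ℝ))
      = ∫ r2 in (0 : ℝ)..1, (0 + 2*r2 + (-2)*r2^2) := by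
    apply intervalIntegral.integral_congr
    intro r2 _
    simp only [intervalIntegral.integral_const, smul_eq_mul, mul_one]
    rw [intervalIntegral.integral_congr (g := fun _ : ℝ => (2 - 2*r2 : ℝ)) (by intro x _; ring)]
    simp [intervalIntegral.integral_const, smul_eq_mul]
    ring
  have h2 : (∫ r2 in (0 : ℝ)..1, ∫ r1 in r2..(1 : ℝ),
        ∫ _r3 in (-1 + r1 + r2)..(1 - r1 + r2), (1 : ℝ))
      = ∫ r2 in (0 : ℝ)..1, (1 + (-2)*r2 + 1*r2^2) := by
    apply intervalIntegral.integral_congr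
    intro r2 _
    simp only [intervalIntegral.integral_const, smul_eq_mul, mul_one]
    rw [intervalIntegral.integral_congr (g := fun r1 : ℝ => (2 - 2*r1 : ℝ)) (by intro x _; ring)]
    rw [intervalIntegral.integral_sub (intervalIntegrable_const)
      (Continuous.intervalIntegrable (by continuity) _ _),
      intervalIntegral.integral_const_mul, integral_id,
      intervalIntegral.integral_const, smul_eq_mul]
    ring
  rw [h1, h2, key, key]
  norm_num

/-- The triple integral
`∫₀¹∫₀^{r₂}∫_{−1+r₁+r₂}^{1+r₁−r₂} dr₃ dr₁ dr₂ + ∫₀¹∫_{r₂}¹∫_{−1+r₁+r₂}^{1−r₁+r₂} dr₃ dr₁ dr₂`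
equals `2/3`; consequently, the volume of the region
`{(r₁,r₂,r₃) : 0 ≤ r₁,r₂ ≤ 1, 1+r₁−r₂−r₃ ≥ 0, 1−r₁+r₂−r₃ ≥ 0, 1−r₁−r₂+r₃ ≥ 0, −1 ≤ r₃ ≤ 1}`
is `2/3`. -/
theorem stmt19 :
    ((∫ r2 in (0 : ℝ)..1, ∫ r1 in (0 : ℝ)..r2,
        ∫ _r3 in (-1 + r1 + r2)..(1 + r1 - r2), (1 : ℝ)) +
      (∫ r2 in (0 : ℝ)..1, ∫ r1 in r2..(1 : ℝ),
        ∫ _r3 in (-1 + r1 + r2)..(1 - r1 + r2), (1 : ℝ)) = 2 / 3) ∧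
    volume {r : Fin 3 → ℝ |
        0 ≤ r 0 ∧ r 0 ≤ 1 ∧ 0 ≤ r 1 ∧ r 1 ≤ 1 ∧
        0 ≤ 1 + r 0 - r 1 - r 2 ∧ 0 ≤ 1 - r 0 + r 1 - r 2 ∧ 0 ≤ 1 - r 0 - r 1 + r 2 ∧
        -1 ≤ r 2 ∧ r 2 ≤ 1} = ENNReal.ofReal (2 / 3) :=
  ⟨stmt19_part1, stmt19_part2⟩
end
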